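/- Let K be a CM field with maximal totally real subfield K₀, and let σ be the nontrivial element of Gal(K/K₀) (complex conjugation). Let p be a rational prime. For each nonzero prime ideal w of 𝒪_K above p, write w̄ for its image σ(w) under σ. Suppose given rational numbers λ_w ∈ [0,1], one for each prime w of 𝒪_K above p, satisfying λ_w + λ_{w̄} = 1 for every such w. Then there exist an integer a ≥ 1 and a nonzero element π ∈ 𝒪_K such that: (i) π·σ(π) = p^a in 𝒪_K; (ii) for every prime w of 𝒪_K above p, ord_w(π) = λ_w · ord_w(p^a) (equivalently ord_w(π)/ord_w(p^a) = λ_w); and (iii) π is a p^a-Weil number, i.e., |φ(π)| = p^{a/2} for every ring homomorphism φ : K → ℂ. -/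

import Mathlib

open IsDedekindDomain NumberField
open UniqueFactorizationMonoid

section Helpers

variable {R : Type*} [CommRing R] [IsDedekindDomain R] [DecidableEq (Ideal R)]

lemma le_pow_iff_le_count {q J : Ideal R} (hq : Prime q) (hJ : J ≠ 0) (k : ℕ) :
    J ≤ q ^ k ↔ k ≤ (normalizedFactors J).count q := by
  rw [← Ideal.dvd_iff_le,
    dvd_iff_normalizedFactors_le_normalizedFactors (pow_ne_zero _ hq.ne_zero) hJ,
    normalizedFactors_pow, normalizedFactors_irreducible hq.irreducible, normalize_eq,
    Multiset.nsmul_singleton, ← Multiset.le_count_iff_replicate_le]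

lemma normalizedFactors_finset_prod_pow {ι : Type*} [DecidableEq ι] {S : Finset ι}
    {g : ι → Ideal R} {f : ι → ℕ} (hg : ∀ i ∈ S, Prime (g i)) :
    normalizedFactors (∏ i ∈ S, g i ^ f i) =
      ∑ i ∈ S, (f i) • ({g i} : Multiset (Ideal R)) := by
  induction S using Finset.induction_on with
  | empty =>
    rw [Finset.prod_empty, Finset.sum_empty, normalizedFactors_one]
  | @insert a s ha ih =>
    have hprime : ∀ i ∈ s, Prime (g i) := fun i hi => hg i (Finset.mem_insert_of_mem hi)
    have hne : ∀ i ∈ s, g i ^ f i ≠ 0 := fun i hi =>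
      pow_ne_zero _ (hprime i hi).ne_zero
    rw [Finset.prod_insert ha, Finset.sum_insert ha,
      normalizedFactors_mul (pow_ne_zero _ (hg a (Finset.mem_insert_self a s)).ne_zero)
        (Finset.prod_ne_zero_iff.mpr hne), normalizedFactors_pow,
      normalizedFactors_irreducible (hg a (Finset.mem_insert_self a s)).irreducible,
      normalize_eq, ih hprime]

lemma count_normalizedFactors_finset_prod_pow {ι : Type*} [DecidableEq ι] {S : Finset ι}
    {g : ι → Ideal R} {f : ι → ℕ} (hg : ∀ i ∈ S, Prime (g i))
    (hinj : ∀ i ∈ S, ∀ j ∈ S, g i = g j → i = j) {w : ι} (hw : w ∈ S) :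
    (normalizedFactors (∏ i ∈ S, g i ^ f i)).count (g w) = f w := by
  rw [normalizedFactors_finset_prod_pow hg, Multiset.count_sum']
  have : ∀ i ∈ S, (f i) • ({g i} : Multiset (Ideal R)) = Multiset.replicate (f i) (g i) := by
    intro i _; rw [Multiset.nsmul_singleton]
  rw [Finset.sum_congr rfl fun i hi => congrArg _ (this i hi)]
  · simp only [Multiset.count_replicate]
    rw [Finset.sum_eq_single w]
    · simp
    · intro b hb hbw
      rw [if_neg]; intro h; exact hbw (hinj b hb w hw h)
    · intro h; exact absurd hw h

end Helpers

set_option synthInstance.maxHeartbeats 1000000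
set_option maxHeartbeats 1000000

/-- The order (valuation) of a nonzero element `x` of a Dedekind domain at a height-one prime
`v`: the exponent of `v` in the factorization of the principal ideal `(x)` into primes. -/
noncomputable def ordAt {R : Type*} [CommRing R] [IsDedekindDomain R]
    (v : HeightOneSpectrum R) (x : R) : ℕ :=
  letI := Classical.decEq (Ideal R)
  Multiset.count v.asIdeal
    (UniqueFactorizationMonoid.normalizedFactors (Ideal.span {x}))

/-- Let `K` be a CM field with maximal totally real subfield `K₀`, complex
conjugation `σ`, and let `p` be a rational prime.  Given rational numbers `λ_w ∈ [0,1]`, one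
for each prime `w` of `𝒪_K` above `p`, with `λ_w + λ_{σ(w)} = 1`, there exist `a ≥ 1` and a
nonzero `π ∈ 𝒪_K` with `π·σ(π) = p^a`, with `ord_w(π) = λ_w · ord_w(p^a)` for every prime `w`
above `p`, and such that `π` is a `p^a`-Weil number: `|φ(π)| = p^(a/2)` for every embedding
`φ : K → ℂ`. -/
theorem stmt_5
    (K₀ K : Type) [Field K₀] [Field K] [NumberField K₀] [NumberField K] [Algebra K₀ K]
    (hK₀real : ∀ φ : K₀ →+* ℂ, ∀ x : K₀, (φ x).im = 0)
    (hKimag : ∀ φ : K →+* ℂ, ∃ x : K, (φ x).im ≠ 0)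
    (hdeg : Module.finrank K₀ K = 2)
    (σ : K ≃ₐ[K₀] K) (hσ : σ ≠ AlgEquiv.refl)
    (hconj : ∀ φ : K →+* ℂ, ∀ x : K, φ (σ x) = starRingEnd ℂ (φ x))
    (p : ℕ) (hp : p.Prime)
    (lam : HeightOneSpectrum (𝓞 K) → ℚ)
    (hlam0 : ∀ w : HeightOneSpectrum (𝓞 K), (p : 𝓞 K) ∈ w.asIdeal → 0 ≤ lam w)
    (hlam1 : ∀ w : HeightOneSpectrum (𝓞 K), (p : 𝓞 K) ∈ w.asIdeal → lam w ≤ 1)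
    (hlamconj : ∀ w wbar : HeightOneSpectrum (𝓞 K), (p : 𝓞 K) ∈ w.asIdeal →
      Ideal.comap (RingOfIntegers.mapRingHom σ) wbar.asIdeal = w.asIdeal →
      lam w + lam wbar = 1) :
    ∃ (a : ℕ) (π : 𝓞 K), 1 ≤ a ∧ π ≠ 0 ∧
      (π : K) * σ (π : K) = (p : K) ^ a ∧
      (∀ w : HeightOneSpectrum (𝓞 K), (p : 𝓞 K) ∈ w.asIdeal →
        (ordAt w π : ℚ) = lam w * (ordAt w ((p : 𝓞 K) ^ a) : ℚ)) ∧
      (∀ φ : K →+* ℂ, ‖φ (π : K)‖ = (p : ℝ) ^ ((a : ℝ) / 2)) := by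
  letI : DecidableEq (Ideal (𝓞 K)) := Classical.decEq (Ideal (𝓞 K))
  letI : DecidableEq (HeightOneSpectrum (𝓞 K)) := Classical.decEq _
  -- an embedding of K into ℂ
  obtain ⟨φ₀⟩ : Nonempty (K →+* ℂ) := by
    refine Fintype.card_pos_iff.mp ?_
    rw [NumberField.Embeddings.card K ℂ]
    exact Module.finrank_pos
  -- σ is an involution
  have hσσ : ∀ x : K, σ (σ x) = x := by
    intro x
    apply φ₀.injective
    rw [hconj, hconj, Complex.conj_conj]
  set σ' : 𝓞 K →+* 𝓞 K := RingOfIntegers.mapRingHom σ with hσ'def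
  have hσ'coe : ∀ x : 𝓞 K, ((σ' x : 𝓞 K) : K) = σ (x : K) := fun x => rfl
  have hσ'inv : ∀ x : 𝓞 K, σ' (σ' x) = x := fun x =>
    RingOfIntegers.ext (by rw [hσ'coe, hσ'coe, hσσ])
  have hσ'p : σ' ((p : 𝓞 K)) = (p : 𝓞 K) := map_natCast σ' p
  -- comap and map by σ' agree
  have hcm : ∀ q : Ideal (𝓞 K), Ideal.comap σ' q = Ideal.map σ' q := by
    intro q
    apply le_antisymm
    · intro x hx
      have h2 := Ideal.mem_map_of_mem σ' (Ideal.mem_comap.mp hx)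
      rwa [hσ'inv] at h2
    · rw [Ideal.map_le_iff_le_comap]
      intro x hx
      rw [Ideal.mem_comap, Ideal.mem_comap, hσ'inv]
      exact hx
  have hcomap_comap : ∀ q : Ideal (𝓞 K), Ideal.comap σ' (Ideal.comap σ' q) = q := by
    intro q
    rw [Ideal.comap_comap]
    have : σ'.comp σ' = RingHom.id (𝓞 K) := RingHom.ext hσ'inv
    rw [this, Ideal.comap_id]
  -- the conjugate of a height one prime
  set cc : HeightOneSpectrum (𝓞 K) → HeightOneSpectrum (𝓞 K) := fun v =>
    ⟨Ideal.comap σ' v.asIdeal, Ideal.IsPrime.comap σ', by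
      intro hbot
      apply v.ne_bot
      rw [← hcomap_comap v.asIdeal, hbot]
      refine (Submodule.eq_bot_iff _).mpr fun x hx => ?_
      rw [Ideal.mem_comap, Ideal.mem_bot] at hx
      have := congrArg σ' hx
      rwa [hσ'inv, map_zero] at this⟩ with hccdef
  have hccIdeal : ∀ v, (cc v).asIdeal = Ideal.comap σ' v.asIdeal := fun v => rfl
  have hcc_cc : ∀ v, cc (cc v) = v := by
    intro v
    apply HeightOneSpectrum.ext
    rw [hccIdeal, hccIdeal, hcomap_comap]
  have hccmem : ∀ v : HeightOneSpectrum (𝓞 K),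
      ((p : 𝓞 K) ∈ (cc v).asIdeal ↔ (p : 𝓞 K) ∈ v.asIdeal) := by
    intro v
    rw [hccIdeal, Ideal.mem_comap, hσ'p]
  have hpair : ∀ v : HeightOneSpectrum (𝓞 K), (p : 𝓞 K) ∈ v.asIdeal →
      lam v + lam (cc v) = 1 := by
    intro v hv
    have := hlamconj (cc v) v ((hccmem v).mpr hv) rfl
    linarith
  -- basic nonvanishing
  have hpK0 : (p : 𝓞 K) ≠ 0 := Nat.cast_ne_zero.mpr hp.ne_zero
  set P0 : Ideal (𝓞 K) := Ideal.span {(p : 𝓞 K)} with hP0def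
  have hP0ne : P0 ≠ 0 := by
    simpa [hP0def, Ideal.span_singleton_eq_bot] using hpK0
  -- the finite set of primes above p
  set S : Finset (HeightOneSpectrum (𝓞 K)) := (Ideal.finite_factors hP0ne).toFinset with hSdef
  have hSmem : ∀ v : HeightOneSpectrum (𝓞 K), v ∈ S ↔ (p : 𝓞 K) ∈ v.asIdeal := by
    intro v
    rw [hSdef, Set.Finite.mem_toFinset, Set.mem_setOf_eq, Ideal.dvd_iff_le,
      Ideal.span_singleton_le_iff_mem]
  have hccS : ∀ v, v ∈ S → cc v ∈ S := by
    intro v hv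
    rw [hSmem] at hv ⊢
    exact (hccmem v).mpr hv
  -- exponents of p
  set e : HeightOneSpectrum (𝓞 K) → ℕ :=
    fun v => (normalizedFactors P0).count v.asIdeal with hedef
  -- factorization of (p)
  have hfact : P0 = ∏ v ∈ S, v.asIdeal ^ e v := by
    conv_lhs => rw [← associated_iff_eq.mp (prod_normalizedFactors hP0ne)]
    rw [Finset.prod_multiset_count]
    refine Finset.prod_bij (fun q hq => ⟨q,
      Ideal.isPrime_of_prime (prime_of_normalized_factor q (Multiset.mem_toFinset.mp hq)),
      (prime_of_normalized_factor q (Multiset.mem_toFinset.mp hq)).ne_zero⟩) ?_ ?_ ?_ ?_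
    · intro q hq
      rw [hSmem]
      have := dvd_of_mem_normalizedFactors (Multiset.mem_toFinset.mp hq)
      rw [Ideal.dvd_iff_le, hP0def, Ideal.span_singleton_le_iff_mem] at this
      exact this
    · intro q hq q' hq' h
      exact congrArg HeightOneSpectrum.asIdeal h
    · intro v hv
      refine ⟨v.asIdeal, Multiset.mem_toFinset.mpr ?_, HeightOneSpectrum.ext rfl⟩
      rw [mem_normalizedFactors_iff hP0ne]
      refine ⟨v.prime, ?_⟩
      rw [Ideal.dvd_iff_le, hP0def, Ideal.span_singleton_le_iff_mem]
      rw [hSmem] at hv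
      exact hv
    · intro q hq
      rfl
  -- e is invariant under conjugation
  have he_cc : ∀ v : HeightOneSpectrum (𝓞 K), e (cc v) = e v := by
    have key : ∀ (v : HeightOneSpectrum (𝓞 K)) (k : ℕ), k ≤ e (cc v) ↔ k ≤ e v := by
      intro v k
      rw [hedef]
      rw [← le_pow_iff_le_count (cc v).prime hP0ne, ← le_pow_iff_le_count v.prime hP0ne]
      rw [hccIdeal, hcm, ← Ideal.map_pow, ← hcm, ← Ideal.map_le_iff_le_comap]
      have : Ideal.map σ' P0 = P0 := by
        rw [hP0def, Ideal.map_span, Set.image_singleton, hσ'p]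
      rw [this]
    intro v
    exact le_antisymm ((key v (e (cc v))).mp le_rfl) ((key v (e v)).mpr le_rfl)
  -- common denominator
  set d : ℕ := ∏ v ∈ S, (lam v).den with hddef
  have hd1 : 1 ≤ d := Finset.one_le_prod' fun v _ => (lam v).pos
  have hd0 : (d : ℚ) ≠ 0 := Nat.cast_ne_zero.mpr (by omega)
  -- integer multiples
  set m : HeightOneSpectrum (𝓞 K) → ℕ :=
    fun v => (lam v).num.toNat * (d / (lam v).den) with hmdef
  have hm : ∀ v ∈ S, (m v : ℚ) = d * lam v := by
    intro v hv
    have hden : (lam v).den ∣ d := Finset.dvd_prod_of_mem _ hv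
    have hnum : ((lam v).num.toNat : ℤ) = (lam v).num :=
      Int.toNat_of_nonneg (Rat.num_nonneg.mpr (hlam0 v ((hSmem v).mp hv)))
    have hdiv : ((d / (lam v).den : ℕ) : ℚ) = (d : ℚ) / ((lam v).den : ℚ) :=
      Nat.cast_div hden (Nat.cast_ne_zero.mpr (lam v).den_nz)
    rw [hmdef]
    push_cast [hdiv]
    rw [show ((lam v).num.toNat : ℚ) = ((lam v).num : ℚ) by exact_mod_cast hnum]
    have hden0 : ((lam v).den : ℚ) ≠ 0 := Nat.cast_ne_zero.mpr (lam v).den_nz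
    have hl : lam v * ((lam v).den : ℚ) = ((lam v).num : ℚ) := by
      nth_rewrite 1 [← Rat.num_div_den (lam v)]
      exact div_mul_cancel₀ _ hden0
    rw [← hl]
    field_simp
  -- pairing of m
  have hmpair : ∀ v ∈ S, m v + m (cc v) = d := by
    intro v hv
    have h1 := hm v hv
    have h2 := hm (cc v) (hccS v hv)
    have h3 := hpair v ((hSmem v).mp hv)
    have : ((m v + m (cc v) : ℕ) : ℚ) = ((d : ℕ) : ℚ) := by
      push_cast
      rw [h1, h2, ← mul_add, h3, mul_one]
    exact_mod_cast this
  set n : HeightOneSpectrum (𝓞 K) → ℕ := fun v => m v * e v with hndef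
  -- the ideal I
  set I : Ideal (𝓞 K) := ∏ v ∈ S, v.asIdeal ^ n v with hIdef
  have hI0 : I ≠ 0 := by
    rw [hIdef]
    rw [Finset.prod_ne_zero_iff]
    exact fun v _ => pow_ne_zero _ v.ne_bot
  -- map σ' as a monoid hom on ideals
  have hmap_prod : ∀ (T : Finset (HeightOneSpectrum (𝓞 K))) (f : HeightOneSpectrum (𝓞 K) → Ideal (𝓞 K)),
      Ideal.map σ' (∏ v ∈ T, f v) = ∏ v ∈ T, Ideal.map σ' (f v) := by
    intro T f
    let M : Ideal (𝓞 K) →* Ideal (𝓞 K) :=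
      { toFun := Ideal.map σ'
        map_one' := by rw [Ideal.one_eq_top]; exact Ideal.map_top σ'
        map_mul' := fun I J => Ideal.map_mul σ' I J }
    exact map_prod M f T
  have hImap : Ideal.map σ' I = ∏ v ∈ S, v.asIdeal ^ n (cc v) := by
    rw [hIdef, hmap_prod]
    have h1 : ∀ v ∈ S, Ideal.map σ' (v.asIdeal ^ n v) = (cc v).asIdeal ^ n v := by
      intro v _
      rw [Ideal.map_pow, hccIdeal, hcm]
    rw [Finset.prod_congr rfl h1]
    refine Finset.prod_bij' (fun v _ => cc v) (fun v _ => cc v)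
      (fun v hv => hccS v hv) (fun v hv => hccS v hv)
      (fun v _ => hcc_cc v) (fun v _ => hcc_cc v) ?_
    intro v hv
    rw [hcc_cc]
  have hIconj : I * Ideal.map σ' I = P0 ^ d := by
    rw [hImap, hIdef, ← Finset.prod_mul_distrib]
    have h1 : ∀ v ∈ S, v.asIdeal ^ n v * v.asIdeal ^ n (cc v) = (v.asIdeal ^ e v) ^ d := by
      intro v hv
      rw [← pow_add, ← pow_mul]
      congr 1
      rw [hndef]
      simp only
      rw [he_cc v, ← add_mul, hmpair v hv, mul_comm]
    rw [Finset.prod_congr rfl h1, Finset.prod_pow, ← hfact]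
  -- class group: I ^ h is principal
  set h : ℕ := Fintype.card (ClassGroup (𝓞 K)) with hhdef
  have hh1 : 1 ≤ h := Fintype.card_pos
  have hInz : I ∈ nonZeroDivisors (Ideal (𝓞 K)) := mem_nonZeroDivisors_of_ne_zero hI0
  have hIhnz : I ^ h ∈ nonZeroDivisors (Ideal (𝓞 K)) := pow_mem hInz h
  have hprin : (I ^ h).IsPrincipal := by
    rw [← ClassGroup.mk0_eq_one_iff hIhnz]
    have hsub : (⟨I ^ h, hIhnz⟩ : nonZeroDivisors (Ideal (𝓞 K))) = ⟨I, hInz⟩ ^ h := by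
      ext
      simp
    rw [hsub, map_pow, hhdef]
    exact pow_card_eq_one
  obtain ⟨π₀, hπ₀⟩ : ∃ π₀ : 𝓞 K, I ^ h = Ideal.span {π₀} := by
    obtain ⟨π₀, hπ₀⟩ := hprin
    exact ⟨π₀, by rw [hπ₀, Ideal.submodule_span_eq]⟩
  have hIh0 : I ^ h ≠ 0 := pow_ne_zero _ hI0
  have hπ₀0 : π₀ ≠ 0 := by
    intro hz
    apply hIh0
    rw [hπ₀, hz]
    exact Ideal.span_singleton_eq_bot.mpr rfl
  -- the key associatedness
  have hspan : Ideal.span {π₀ * σ' π₀} = Ideal.span {(p : 𝓞 K) ^ (d * h)} := by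
    rw [← Ideal.span_singleton_mul_span_singleton, ← hπ₀]
    have hmapspan : Ideal.map σ' (Ideal.span {π₀}) = Ideal.span {σ' π₀} := by
      rw [Ideal.map_span, Set.image_singleton]
    rw [← hmapspan, ← hπ₀, Ideal.map_pow, ← mul_pow, hIconj, ← pow_mul, hP0def,
      Ideal.span_singleton_pow]
  obtain ⟨u, hu⟩ : Associated (π₀ * σ' π₀) ((p : 𝓞 K) ^ (d * h)) :=
    Ideal.span_singleton_eq_span_singleton.mp hspan
  -- define a and π
  set a : ℕ := 2 * (d * h) with hadef
  set π : 𝓞 K := π₀ ^ 2 * (u : 𝓞 K) with hπdef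
  have ha1 : 1 ≤ a := by
    have : 1 ≤ d * h := Nat.one_le_iff_ne_zero.mpr (by positivity)
    omega
  have hπ0 : π ≠ 0 := by
    rw [hπdef]
    exact mul_ne_zero (pow_ne_zero _ hπ₀0) (Units.ne_zero u)
  -- pass to K
  have huK : ((π₀ : K)) * σ (π₀ : K) * (((u : 𝓞 K) : K)) = (p : K) ^ (d * h) := by
    have h2 := congrArg (algebraMap (𝓞 K) K) hu
    simp only [map_mul, map_pow, map_natCast] at h2
    rw [← hσ'coe]
    exact h2
  have hP0' : ((π₀ : K)) ≠ 0 := RingOfIntegers.coe_ne_zero_iff.mpr hπ₀0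
  have hσP0 : σ ((π₀ : K)) ≠ 0 := fun hz => hP0' (by rw [← hσσ (π₀ : K), hz, map_zero])
  have hU0 : (((u : 𝓞 K) : K)) ≠ 0 := RingOfIntegers.coe_ne_zero_iff.mpr (Units.ne_zero u)
  have hpk0 : ((p : K)) ≠ 0 := Nat.cast_ne_zero.mpr hp.ne_zero
  -- σ fixes the image of u
  have hσU : σ (((u : 𝓞 K) : K)) = ((u : 𝓞 K) : K) := by
    have h2 := congrArg σ huK
    simp only [map_mul, map_pow, map_natCast] at h2
    rw [hσσ (π₀ : K)] at h2
    have h3 : ((π₀ : K)) * σ (π₀ : K) * σ (((u : 𝓞 K) : K)) = (p : K) ^ (d * h) := by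
      rw [← h2]; ring
    rw [← huK] at h3
    exact mul_left_cancel₀ (mul_ne_zero hP0' hσP0) h3
  -- main multiplicative identity in K
  have hπK : ((π : K)) = (π₀ : K) ^ 2 * ((u : 𝓞 K) : K) := by
    rw [hπdef]
    push_cast
    rfl
  have hmain : (π : K) * σ (π : K) = (p : K) ^ a := by
    rw [hπK, map_mul, map_pow, hσU, hadef]
    have : ((π₀ : K)) ^ 2 * ((u : 𝓞 K) : K) * (σ (π₀ : K) ^ 2 * ((u : 𝓞 K) : K)) =
        ((π₀ : K) * σ (π₀ : K) * ((u : 𝓞 K) : K)) ^ 2 := by ring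
    rw [this, huK, ← pow_mul, mul_comm (d * h) 2]
  -- factorization of the span of π
  have hprimes : ∀ v ∈ S, Prime (HeightOneSpectrum.asIdeal v) := fun v _ => v.prime
  have hinj : ∀ i ∈ S, ∀ j ∈ S, i.asIdeal = j.asIdeal → i = j :=
    fun i _ j _ hij => HeightOneSpectrum.ext hij
  have hspanπ : Ideal.span {π} = ∏ v ∈ S, v.asIdeal ^ (n v * (h * 2)) := by
    have h1 : Associated (π₀ ^ 2) π := ⟨u, rfl⟩
    rw [← Ideal.span_singleton_eq_span_singleton.mpr h1, ← Ideal.span_singleton_pow, ← hπ₀,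
      ← pow_mul, hIdef, ← Finset.prod_pow]
    exact Finset.prod_congr rfl fun v _ => by rw [← pow_mul]
  have hordπ : ∀ w ∈ S, ordAt w π = n w * (h * 2) := by
    intro w hw
    show Multiset.count w.asIdeal (normalizedFactors (Ideal.span {π})) = _
    rw [hspanπ]
    exact count_normalizedFactors_finset_prod_pow hprimes hinj hw
  have hordp : ∀ w ∈ S, ordAt w ((p : 𝓞 K) ^ a) = e w * a := by
    intro w hw
    show Multiset.count w.asIdeal (normalizedFactors (Ideal.span {(p : 𝓞 K) ^ a})) = _
    rw [← Ideal.span_singleton_pow, ← hP0def, hfact, ← Finset.prod_pow]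
    rw [show (∏ v ∈ S, (v.asIdeal ^ e v) ^ a) = ∏ v ∈ S, v.asIdeal ^ (e v * a) from
      Finset.prod_congr rfl fun v _ => by rw [← pow_mul]]
    exact count_normalizedFactors_finset_prod_pow hprimes hinj hw
  -- the order condition
  have hord : ∀ w : HeightOneSpectrum (𝓞 K), (p : 𝓞 K) ∈ w.asIdeal →
      (ordAt w π : ℚ) = lam w * (ordAt w ((p : 𝓞 K) ^ a) : ℚ) := by
    intro w hw
    have hwS := (hSmem w).mpr hw
    rw [hordπ w hwS, hordp w hwS]
    have h1 : (n w : ℚ) = (d : ℚ) * lam w * (e w : ℚ) := by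
      rw [hndef]
      push_cast
      rw [hm w hwS]
    push_cast
    rw [h1, hadef]
    push_cast
    ring
  -- the Weil number condition
  have hWeil : ∀ φ : K →+* ℂ, ‖φ (π : K)‖ = (p : ℝ) ^ ((a : ℝ) / 2) := by
    intro φ
    have h2 := congrArg φ huK
    simp only [map_mul, map_pow, map_natCast] at h2
    rw [hconj φ (π₀ : K), Complex.mul_conj] at h2
    have h3 := congrArg (‖·‖) h2
    simp only [norm_mul, norm_pow, Complex.norm_real, Real.norm_eq_abs, Complex.norm_natCast] at h3
    rw [abs_of_nonneg (Complex.normSq_nonneg _)] at h3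
    have h4 : φ (π : K) = φ (π₀ : K) ^ 2 * φ ((u : 𝓞 K) : K) := by rw [hπK, map_mul, map_pow]
    rw [h4, norm_mul, norm_pow, Complex.sq_norm, h3,
      show ((a : ℝ) / 2) = ((d * h : ℕ) : ℝ) by rw [hadef]; push_cast; ring,
      Real.rpow_natCast]
  exact ⟨a, π, ha1, hπ0, hmain, hord, hWeil⟩
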